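/- arXiv:1810.11965 — 2 statements merged into one kernel-verified Lean document; each statement's English description precedes it below -/
import Mathlib

section
/- Let G be a 2-connected simple graph, s₁, s₂ two distinct vertices, and C a connected component of G - {s₁, s₂}. If B is a leaf block of C (a maximal 2-connected subgraph of C containing at most one cut vertex of C), then B contains a vertex adjacent in G to s₁ or a vertex adjacent in G to s₂, other than the cut vertex of C contained in B. -/
open SimpleGraph Set

variable {V : Type*}

/-- `C` is (the vertex set of) a connected component of the subgraph of `G` induced on `S`. -/
def IsCompOf (G : SimpleGraph V) (S C : Set V) : Prop :=
  C ⊆ S ∧ C.Nonempty ∧ (G.induce C).Connected ∧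
    ∀ D : Set V, C ⊆ D → D ⊆ S → (G.induce D).Connected → D = C

/-- `G` is 2-connected: connected, at least 3 vertices, and no cut vertex. -/
def TwoConn [Fintype V] (G : SimpleGraph V) : Prop :=
  3 ≤ Fintype.card V ∧ G.Connected ∧ ∀ v : V, (G.induce ({v} : Set V)ᶜ).Connected

/-- The induced subgraph on `S` is 2-connected. -/
def TwoConnOn (G : SimpleGraph V) (S : Set V) : Prop :=
  3 ≤ S.ncard ∧ (G.induce S).Connected ∧ ∀ v ∈ S, (G.induce (S \ {v})).Connected

/-- `v` is a cut vertex of the (connected) induced subgraph on `S`. -/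
def IsCutVertexOn (G : SimpleGraph V) (S : Set V) (v : V) : Prop :=
  v ∈ S ∧ (G.induce S).Connected ∧ ¬ (G.induce (S \ {v})).Connected

/-- The induced subgraph on `B` is connected and has no cut vertex of itself. -/
def NoCutSet (G : SimpleGraph V) (B : Set V) : Prop :=
  (G.induce B).Connected ∧ ∀ v ∈ B, (G.induce (B \ {v})).Connected

/-- `B` is (the vertex set of) a block of the induced subgraph on `S`:
a maximal subset inducing a connected subgraph without cut vertex. -/
def IsBlockOf (G : SimpleGraph V) (S B : Set V) : Prop :=
  B ⊆ S ∧ B.Nonempty ∧ NoCutSet G B ∧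
    ∀ B' : Set V, B ⊆ B' → B' ⊆ S → NoCutSet G B' → B' = B

/-! ### Auxiliary lemmas -/

lemma aux_induce_singleton_connected (G : SimpleGraph V) (v : V) :
    (G.induce ({v} : Set V)).Connected := by
  have hne : Nonempty ↥({v} : Set V) := ⟨⟨v, rfl⟩⟩
  refine ⟨fun a b => ?_⟩
  have : a = b := Subtype.ext (by
    have ha := a.2; have hb := b.2
    simp only [Set.mem_singleton_iff] at ha hb
    rw [ha, hb])
  exact this ▸ Reachable.refl _

lemma aux_conn_insert_of_adj {G : SimpleGraph V} {s : Set V} {u v : V}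
    (hs : (G.induce s).Connected) (hu : u ∈ s) (huv : G.Adj u v) :
    (G.induce (insert v s)).Connected := by
  have h := connected_induce_union hs.preconnected (aux_induce_singleton_connected G v).preconnected hu
    (Set.mem_singleton v) huv
  rwa [Set.union_singleton] at h

lemma aux_closed_walk {W : Type*} {G' : SimpleGraph W} {T : Set W}
    (hcl : ∀ u ∈ T, ∀ v, G'.Adj u v → v ∈ T) :
    ∀ {a b : W}, G'.Walk a b → a ∈ T → b ∈ T := by
  intro a b w
  induction w with
  | nil => exact id
  | cons h p ih => intro ha; exact ih (hcl _ ha _ h)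

lemma aux_exists_ne_of_noCutSet {G : SimpleGraph V} {B : Set V} (h : NoCutSet G B)
    (a : V) : ∃ b ∈ B, b ≠ a := by
  by_cases ha : a ∈ B
  · obtain ⟨⟨b, hb⟩⟩ := (h.2 a ha).nonempty
    exact ⟨b, hb.1, by simpa using hb.2⟩
  · obtain ⟨⟨b, hb⟩⟩ := h.1.nonempty
    exact ⟨b, hb, fun hba => ha (hba ▸ hb)⟩

/-- The ear lemma: attaching a path with both endpoints in a set inducing a
2-connected subgraph keeps the property of having no cut vertex. -/
lemma aux_ear {G : SimpleGraph V} {B : Set V} {x b : V}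
    (hB : NoCutSet G B) (hx : x ∈ B) (hb : b ∈ B) (hxb : x ≠ b)
    (w : G.Walk x b) (hw : w.IsPath) :
    NoCutSet G (B ∪ {y | y ∈ w.support}) := by
  classical
  obtain ⟨hBc, hBd⟩ := hB
  constructor
  · exact induce_union_connected hBc.preconnected w.connected_induce_support.preconnected
      ⟨x, hx, w.start_mem_support⟩
  intro v hv
  by_cases hvE : v ∈ w.support
  · -- v lies on the ear
    set q := w.takeUntil v hvE with hqdef
    set r := w.dropUntil v hvE with hrdef
    have hspec : q.append r = w := w.take_spec hvE
    have hqp : q.IsPath := hw.takeUntil hvE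
    have hrp : r.IsPath := hw.dropUntil hvE
    have hne : (B \ {v}).Nonempty := by
      by_cases hvx : v = x
      · exact ⟨b, hb, by simp [hvx, Ne.symm hxb]⟩
      · exact ⟨x, hx, by simp [Ne.symm hvx]⟩
    have hBv : (G.induce (B \ {v})).Connected := by
      by_cases hvB : v ∈ B
      · exact hBd v hvB
      · rwa [Set.diff_singleton_eq_self hvB]
    have piece : ∀ {z : V} (p' : G.Walk v z), p'.IsPath → z ∈ B →
        (G.induce ((B \ {v}) ∪ {y | y ∈ p'.support ∧ y ≠ v})).Connected := by
      intro z p' hp' hz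
      cases p' with
      | nil =>
        have hempty : {y | y ∈ (Walk.nil : G.Walk v v).support ∧ y ≠ v} = ∅ := by
          ext y; simp
        rw [hempty, Set.union_empty]
        exact hBv
      | @cons _ u _ hadj p'' =>
        have hvni : v ∉ p''.support :=
          (List.nodup_cons.mp (by simpa using hp'.support_nodup)).1
        have hzv : z ≠ v := fun hh => hvni (hh ▸ p''.end_mem_support)
        have hset : {y | y ∈ (Walk.cons hadj p'').support ∧ y ≠ v}
            = {y | y ∈ p''.support} := by
          ext y
          simp only [Walk.support_cons, List.mem_cons, Set.mem_setOf_eq]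
          constructor
          · rintro ⟨rfl | hy, hne'⟩
            · exact absurd rfl hne'
            · exact hy
          · intro hy; exact ⟨Or.inr hy, fun hh => hvni (hh ▸ hy)⟩
        rw [hset]
        exact induce_union_connected hBv.preconnected p''.connected_induce_support.preconnected
          ⟨z, ⟨hz, hzv⟩, p''.end_mem_support⟩
    have hA₁ := piece q.reverse hqp.reverse hx
    have hA₂ := piece r hrp hb
    have hsplit : (B ∪ {y | y ∈ w.support}) \ {v}
        = ((B \ {v}) ∪ {y | y ∈ q.reverse.support ∧ y ≠ v})
          ∪ ((B \ {v}) ∪ {y | y ∈ r.support ∧ y ≠ v}) := by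
      ext y
      have hmem : y ∈ w.support ↔ y ∈ q.support ∨ y ∈ r.support := by
        rw [← hspec, Walk.mem_support_append_iff]
      have hqrev : y ∈ q.reverse.support ↔ y ∈ q.support := by
        rw [Walk.support_reverse, List.mem_reverse]
      simp only [Set.mem_diff, Set.mem_union, Set.mem_setOf_eq, Set.mem_singleton_iff,
        hmem, hqrev]
      tauto
    rw [hsplit]
    obtain ⟨z₀, hz₀⟩ := hne
    exact induce_union_connected hA₁.preconnected hA₂.preconnected ⟨z₀, Or.inl hz₀, Or.inl hz₀⟩
  · -- v is in B, not on the ear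
    have hvB : v ∈ B := hv.resolve_right hvE
    have hvx : v ≠ x := fun h => hvE (h ▸ w.start_mem_support)
    have hsplit : (B ∪ {y | y ∈ w.support}) \ {v}
        = (B \ {v}) ∪ {y | y ∈ w.support} := by
      ext y
      simp only [Set.mem_diff, Set.mem_union, Set.mem_setOf_eq, Set.mem_singleton_iff]
      constructor
      · rintro ⟨h1 | h1, h2⟩
        · exact Or.inl ⟨h1, h2⟩
        · exact Or.inr h1
      · rintro (⟨h1, h2⟩ | h1)
        · exact ⟨Or.inl h1, h2⟩
        · exact ⟨Or.inr h1, fun hh => hvE (hh ▸ h1)⟩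
    rw [hsplit]
    exact induce_union_connected (hBd v hvB).preconnected w.connected_induce_support.preconnected
      ⟨x, ⟨hx, by simpa using Ne.symm hvx⟩, w.start_mem_support⟩

/-- Key claim: a non-cut-vertex of `C` lying in a block `B` of `C` has all its
`C`-neighbours inside `B`. -/
lemma aux_key {G : SimpleGraph V} {C B : Set V}
    (hCconn : (G.induce C).Connected)
    (hB : IsBlockOf G C B) {x c : V} (hx : x ∈ B)
    (hxcut : ¬ IsCutVertexOn G C x) (hc : c ∈ C) (hadj : G.Adj x c) :
    c ∈ B := by
  classical
  by_contra hcB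
  obtain ⟨hBC, hBne, hBnc, hBmax⟩ := hB
  have hxC : x ∈ C := hBC hx
  have hCx : (G.induce (C \ {x})).Connected := by
    by_contra hcon
    exact hxcut ⟨hxC, hCconn, hcon⟩
  obtain ⟨b₀, hb₀B, hb₀x⟩ := aux_exists_ne_of_noCutSet hBnc x
  have hcx : c ≠ x := fun h => G.irrefl (h ▸ hadj)
  have hcmem : c ∈ C \ {x} := ⟨hc, hcx⟩
  have hbmem : b₀ ∈ C \ {x} := ⟨hBC hb₀B, hb₀x⟩
  obtain ⟨W⟩ := hCx.preconnected ⟨c, hcmem⟩ ⟨b₀, hbmem⟩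
  let W' : G.Walk c b₀ := W.map (SimpleGraph.Embedding.induce (C \ {x})).toHom
  have hWsup : ∀ y ∈ W'.support, y ∈ C \ {x} := by
    intro y hy
    rw [show W'.support = _ from Walk.support_map _ _, List.mem_map] at hy
    obtain ⟨z, _, rfl⟩ := hy
    exact z.2
  set p : G.Walk c b₀ := W'.bypass with hpdef
  have hpsup : ∀ y ∈ p.support, y ∈ C \ {x} :=
    fun y hy => hWsup y (W'.support_bypass_subset hy)
  have hxp : x ∉ p.support := fun h => (hpsup x h).2 rfl
  set w : G.Walk x b₀ := Walk.cons hadj p with hwdef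
  have hwpath : w.IsPath := W'.bypass_isPath.cons hxp
  have hEar := aux_ear ⟨hBnc.1, hBnc.2⟩ hx hb₀B (Ne.symm hb₀x) w hwpath
  have hsubC : B ∪ {y | y ∈ w.support} ⊆ C := by
    rintro y (hyB | hyE)
    · exact hBC hyB
    · rw [Set.mem_setOf_eq, hwdef, Walk.support_cons, List.mem_cons] at hyE
      rcases hyE with rfl | hyE
      · exact hxC
      · exact (hpsup y hyE).1
  have heq : B ∪ {y | y ∈ w.support} = B :=
    hBmax _ Set.subset_union_left hsubC hEar
  have hcmem' : c ∈ B ∪ {y | y ∈ w.support} := by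
    refine Or.inr ?_
    rw [Set.mem_setOf_eq, hwdef, Walk.support_cons, List.mem_cons]
    exact Or.inr p.start_mem_support
  rw [heq] at hcmem'
  exact hcB hcmem'

theorem stmt4 {V : Type*} [Fintype V] (G : SimpleGraph V) (s₁ s₂ : V)
    (h2c : TwoConn G) (hne : s₁ ≠ s₂)
    (C : Set V) (hC : IsCompOf G ({s₁, s₂} : Set V)ᶜ C)
    (B : Set V) (hB : IsBlockOf G C B)
    (hleaf : ∀ a a', a ∈ B → a' ∈ B → IsCutVertexOn G C a →
      IsCutVertexOn G C a' → a = a') :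
    ∃ x ∈ B, ¬ IsCutVertexOn G C x ∧ (G.Adj x s₁ ∨ G.Adj x s₂) := by
  classical
  by_contra hcon
  push_neg at hcon
  obtain ⟨hBC, hBne, hBnc, hBmax⟩ := hB
  obtain ⟨hCS, hCne, hCconn, hCmax⟩ := hC
  -- choose a vertex `a₀` of `B` such that every cut vertex of `C` in `B` equals `a₀`
  have ha₀ : ∃ a₀ ∈ B, ∀ y ∈ B, IsCutVertexOn G C y → y = a₀ := by
    by_cases hex : ∃ a ∈ B, IsCutVertexOn G C a
    · obtain ⟨a, haB, hacut⟩ := hex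
      exact ⟨a, haB, fun y hyB hycut => hleaf y a hyB haB hycut hacut⟩
    · push_neg at hex
      obtain ⟨a, haB⟩ := hBne
      exact ⟨a, haB, fun y hyB hycut => absurd hycut (hex y hyB)⟩
  obtain ⟨a₀, ha₀B, ha₀prop⟩ := ha₀
  -- every vertex of `B` other than `a₀` has all its `G`-neighbours in `B`
  have hnbr : ∀ y ∈ B, y ≠ a₀ → ∀ z, G.Adj y z → z ∈ B := by
    intro y hyB hya z hadj
    have hycut : ¬ IsCutVertexOn G C y := fun h => hya (ha₀prop y hyB h)
    have hnosadj := hcon y hyB hycut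
    have hz1 : z ≠ s₁ := fun h => hnosadj.1 (h ▸ hadj)
    have hz2 : z ≠ s₂ := fun h => hnosadj.2 (h ▸ hadj)
    have hzS : z ∈ ({s₁, s₂} : Set V)ᶜ := by simp [hz1, hz2]
    have hyC : y ∈ C := hBC hyB
    have hzC : z ∈ C := by
      have hD : (G.induce (insert z C)).Connected := aux_conn_insert_of_adj hCconn hyC hadj
      have heq : insert z C = C :=
        hCmax _ (Set.subset_insert _ _) (Set.insert_subset hzS hCS) hD
      rw [← heq]; exact Set.mem_insert _ _
    exact aux_key hCconn ⟨hBC, hBne, hBnc, hBmax⟩ hyB hycut hzC hadj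
  obtain ⟨b₁, hb₁B, hb₁a⟩ := aux_exists_ne_of_noCutSet hBnc a₀
  -- work in the graph `G - a₀`, which is connected by 2-connectivity
  have hGa : (G.induce ({a₀} : Set V)ᶜ).Connected := h2c.2.2 a₀
  set T : Set (({a₀} : Set V)ᶜ : Set V) := {v | ↑v ∈ B} with hTdef
  have hclosed : ∀ u ∈ T, ∀ v, (G.induce ({a₀} : Set V)ᶜ).Adj u v → v ∈ T := by
    rintro ⟨u, hu⟩ huT ⟨v, hv⟩ hadj
    have hua : u ≠ a₀ := by simpa using hu
    exact hnbr u huT hua v hadj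
  have hs₁mem : s₁ ∈ ({a₀} : Set V)ᶜ := by
    have h1 : a₀ ∈ ({s₁, s₂} : Set V)ᶜ := hCS (hBC ha₀B)
    simp only [Set.mem_compl_iff, Set.mem_insert_iff, Set.mem_singleton_iff, not_or] at h1 ⊢
    exact fun h => h1.1 h.symm
  have hb₁mem : b₁ ∈ ({a₀} : Set V)ᶜ := by simpa using hb₁a
  obtain ⟨Wk⟩ := hGa.preconnected ⟨b₁, hb₁mem⟩ ⟨s₁, hs₁mem⟩
  have hs₁T : (⟨s₁, hs₁mem⟩ : (({a₀} : Set V)ᶜ : Set V)) ∈ T :=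
    aux_closed_walk hclosed Wk hb₁B
  have hs₁C : s₁ ∈ C := hBC hs₁T
  have := hCS hs₁C
  simp at this
end

section
/- Let G be a 2-connected simple graph on n ≥ 3 vertices and let n₁, n₂ be positive integers with n₁ + n₂ = n. Then there exists a partition of the vertex set into V₁ and V₂ with |V₁| = n₁, |V₂| = n₂ such that both induced subgraphs G[V₁] and G[V₂] are connected. -/
open SimpleGraph Set

variable {V : Type*}

section Aux

/-- Reachability within a set of vertices. -/
def Reach (G : SimpleGraph V) (S : Set V) : V → V → Prop :=
  Relation.ReflTransGen (fun a b => G.Adj a b ∧ a ∈ S ∧ b ∈ S)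

variable {G : SimpleGraph V} {S T : Set V} {x y z : V}

lemma reach_mono (h : S ⊆ T) (hr : Reach G S x y) : Reach G T x y :=
  by
  induction hr with
  | refl => exact Relation.ReflTransGen.refl
  | tail _ h' ih => exact Relation.ReflTransGen.tail ih ⟨h'.1, h h'.2.1, h h'.2.2⟩

lemma reach_symm (hr : Reach G S x y) : Reach G S y x :=
  by
  induction hr with
  | refl => exact Relation.ReflTransGen.refl
  | tail _ h ih => exact Relation.ReflTransGen.head ⟨h.1.symm, h.2.2, h.2.1⟩ ih

lemma mem_of_reach (hx : x ∈ S) (hr : Reach G S x y) : y ∈ S := by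
  induction hr with
  | refl => exact hx
  | tail _ h _ => exact h.2.2

lemma reach_of_walk : ∀ {a b : ↥S} (_ : (G.induce S).Walk a b), Reach G S (a : V) b := by
  intro a b p
  induction p with
  | nil => exact Relation.ReflTransGen.refl
  | cons h _ ih =>
    exact Relation.ReflTransGen.head ⟨by simpa using h, Subtype.coe_prop _, Subtype.coe_prop _⟩ ih

lemma reach_univ_of_walk : ∀ {a b : V} (_ : G.Walk a b), Reach G Set.univ a b := by
  intro a b p
  induction p with
  | nil => exact Relation.ReflTransGen.refl
  | cons h _ ih => exact Relation.ReflTransGen.head ⟨h, trivial, trivial⟩ ih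

lemma induce_connected_iff :
    (G.induce S).Connected ↔ S.Nonempty ∧ ∀ x ∈ S, ∀ y ∈ S, Reach G S x y := by
  constructor
  · intro h
    obtain ⟨⟨x, hx⟩⟩ := h.nonempty
    refine ⟨⟨x, hx⟩, fun a ha b hb => ?_⟩
    obtain ⟨p⟩ := h.preconnected ⟨a, ha⟩ ⟨b, hb⟩
    exact reach_of_walk p
  · rintro ⟨⟨x, hx⟩, h⟩
    have hpre : (G.induce S).Preconnected := by
      rintro ⟨a, ha⟩ ⟨b, hb⟩
      have hr : Reach G S a b := h a ha b hb
      have key : ∀ c (hc : Reach G S a c) (hcS : c ∈ S),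
          (G.induce S).Reachable ⟨a, ha⟩ ⟨c, hcS⟩ := by
        intro c hc
        induction hc with
        | refl => intro _; exact Reachable.refl _
        | @tail b' c' hab hbc ih =>
          intro hcS
          exact (ih hbc.2.1).trans (SimpleGraph.Adj.reachable (by simpa using hbc.1 :
            (G.induce S).Adj ⟨b', hbc.2.1⟩ ⟨c', hcS⟩))
      exact key b hr hb
    have : Nonempty ↥S := ⟨⟨x, hx⟩⟩
    exact Connected.mk hpre
  
/-- The component of `x` in the graph induced on `S`. -/
def comp (G : SimpleGraph V) (S : Set V) (x : V) : Set V := {y | Reach G S x y}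

lemma self_mem_comp : x ∈ comp G S x := Relation.ReflTransGen.refl

lemma comp_subset (hx : x ∈ S) : comp G S x ⊆ S := fun _ hy => mem_of_reach hx hy

lemma comp_closed (hy : y ∈ comp G S x) (hx : x ∈ S) (hadj : G.Adj y z) (hz : z ∈ S) :
    z ∈ comp G S x :=
  Relation.ReflTransGen.tail hy ⟨hadj, mem_of_reach hx hy, hz⟩

lemma reach_comp (hr : Reach G S x y) : Reach G (comp G S x) x y := by
  induction hr with
  | refl => exact Relation.ReflTransGen.refl
  | @tail b c hab hbc ih =>
    exact Relation.ReflTransGen.tail ih ⟨hbc.1, hab, Relation.ReflTransGen.tail hab hbc⟩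

/-- A crossing-edge lemma: a chain from inside `P` to outside `P` crosses the boundary. -/
lemma crossing {P : Set V} (hr : Reach G S x y) (hx : x ∈ P) (hy : y ∉ P) :
    ∃ a b, a ∈ P ∧ b ∉ P ∧ G.Adj a b ∧ a ∈ S ∧ b ∈ S := by
  induction hr with
  | refl => exact absurd hx hy
  | @tail b c hab hbc ih =>
    by_cases hbP : b ∈ P
    · exact ⟨b, c, hbP, hy, hbc⟩
    · exact ih hbP

end Aux

section Key

variable [Fintype V] {G : SimpleGraph V}

/-- In a 2-connected graph, if `Sᶜ` induces a connected subgraph with at least two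
vertices, then some vertex `u` of `Sᶜ` has a neighbour in `S` and `Sᶜ \ {u}` is
still connected. -/
lemma key (h2c : TwoConn G) {S : Set V} (hSne : S.Nonempty)
    (hScc : (G.induce Sᶜ).Connected) (hcard : 2 ≤ Sᶜ.ncard) :
    ∃ u ∈ Sᶜ, (∃ s ∈ S, G.Adj u s) ∧ (G.induce (Sᶜ \ {u})).Connected := by
  classical
  set H := Sᶜ with hH
  obtain ⟨hHne, hHreach⟩ := induce_connected_iff.mp hScc
  -- the set of vertices of H with a neighbour in S
  set N : Set V := {u | u ∈ H ∧ ∃ s ∈ S, G.Adj u s} with hN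
  have hNsub : N ⊆ H := fun u hu => hu.1
  -- N is nonempty
  obtain ⟨s, hs⟩ := hSne
  obtain ⟨t, ht⟩ := hHne
  have hNne : N.Nonempty := by
    obtain ⟨p⟩ := h2c.2.1.preconnected t s
    have hts : Reach G Set.univ t s := reach_univ_of_walk p
    have hsH : s ∉ H := fun h => h hs
    obtain ⟨a, b, haH, hbH, hab, -, -⟩ := crossing (P := H) hts ht hsH
    exact ⟨a, haH, b, not_not.mp hbH, hab⟩
  by_cases hgood : ∃ u ∈ N, (G.induce (H \ {u})).Connected
  · obtain ⟨u, ⟨huH, hus⟩, hconn⟩ := hgood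
    exact ⟨u, huH, hus, hconn⟩
  push_neg at hgood
  exfalso
  -- minimize the size of a component of H \ {u} over u ∈ N
  set A : Set ℕ := {n | ∃ u ∈ N, ∃ w ∈ H \ {u}, (comp G (H \ {u}) w).ncard = n} with hA
  have hAne : A.Nonempty := by
    obtain ⟨u, huN⟩ := hNne
    have h2 : (H \ {u}).Nonempty := by
      rw [← Set.ncard_pos]
      rw [Set.ncard_diff_singleton_of_mem (hNsub huN)]
      omega
    obtain ⟨w, hw⟩ := h2
    exact ⟨_, u, huN, w, hw, rfl⟩
  obtain ⟨n, ⟨u, huN, w, hw, hCn⟩, hmin⟩ := Nat.lt_wfRel.wf.has_min A hAne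
  set C : Set V := comp G (H \ {u}) w with hC
  have hCsub : C ⊆ H \ {u} := comp_subset hw
  -- find u' ∈ C with a neighbour in S, via connectivity of G - u
  have hGu : (G.induce ({u} : Set V)ᶜ).Connected := h2c.2.2 u
  obtain ⟨-, hGur⟩ := induce_connected_iff.mp hGu
  have hwne : w ≠ u := hw.2
  have hsne : s ≠ u := fun h => (huN.1 : u ∈ H) (h ▸ hs)
  have hws : Reach G ({u} : Set V)ᶜ w s := hGur w hwne s hsne
  have hsC : s ∉ C := fun h => (hCsub h).1 hs
  obtain ⟨a, b, haC, hbC, hab, haU, hbU⟩ := crossing (P := C) hws self_mem_comp hsC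
  have hbS : b ∈ S := by
    by_contra hbS
    have hbH : b ∈ H \ {u} := ⟨hbS, hbU⟩
    exact hbC (comp_closed haC hw hab hbH)
  have hu'N : a ∈ N := ⟨(hCsub haC).1, b, hbS, hab⟩
  set u' : V := a with hu'
  have hu'C : u' ∈ C := haC
  have huu' : u ≠ u' := fun h => (hCsub hu'C).2 h.symm
  -- H \ {u'} is disconnected
  have hbad := hgood u' hu'N
  have huH' : u ∈ H \ {u'} := ⟨huN.1, huu'⟩
  rw [induce_connected_iff] at hbad
  push_neg at hbad
  obtain ⟨y, hy, z, hz, hyz⟩ := hbad ⟨u, huH'⟩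
  -- pick a component of H \ {u'} not containing u
  have hw' : ∃ w' ∈ H \ {u'}, ¬ Reach G (H \ {u'}) w' u := by
    by_cases hyu : Reach G (H \ {u'}) y u
    · refine ⟨z, hz, fun hzu => hyz ?_⟩
      exact hyu.trans (reach_symm hzu)
    · exact ⟨y, hy, hyu⟩
  obtain ⟨w', hw'H, hw'u⟩ := hw'
  set D : Set V := comp G (H \ {u'}) w' with hD
  have huD : u ∉ D := hw'u
  -- D ⊆ C
  have hDsubC : D ⊆ C := by
    intro d hd
    by_contra hdC
    -- d ∈ H \ {u'}
    have hdH' : d ∈ H \ {u'} := comp_subset hw'H hd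
    have hdu : d ≠ u := fun h => huD (h ▸ hd)
    have hdH : d ∈ H \ {u} := ⟨hdH'.1, hdu⟩
    -- component of d in H \ {u}
    set C₂ : Set V := comp G (H \ {u}) d with hC₂
    have hC₂sub : C₂ ⊆ H \ {u} := comp_subset hdH
    have hC₂C : u' ∉ C₂ := by
      intro hu'C₂
      -- then d and w are in the same component, so d ∈ C
      have h1 : Reach G (H \ {u}) d u' := hu'C₂
      have h2 : Reach G (H \ {u}) w u' := hu'C
      exact hdC (h2.trans (reach_symm h1))
    -- C₂ ∪ {u} ⊆ H \ {u'}
    have hsub : C₂ ∪ {u} ⊆ H \ {u'} := by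
      rintro x (hx | hx)
      · exact ⟨(hC₂sub hx).1, fun h => hC₂C (h ▸ hx)⟩
      · rw [Set.mem_singleton_iff] at hx
        exact hx ▸ huH'
    -- reach from d to u within C₂ ∪ {u}
    have hdu' : Reach G (H \ {u'}) d u := by
      have hdu_reach : Reach G H d u := hHreach d hdH.1 u huN.1
      have huC₂ : u ∉ C₂ := fun h => (hC₂sub h).2 rfl
      obtain ⟨a', b', ha'C, hb'C, hab', ha'H, hb'H⟩ :=
        crossing (P := C₂) hdu_reach self_mem_comp huC₂
      have hb'u : b' = u := by
        by_contra hb'u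
        exact hb'C (comp_closed ha'C hdH hab' ⟨hb'H, hb'u⟩)
      have h1 : Reach G C₂ d a' := reach_comp ha'C
      have h2 : Reach G (C₂ ∪ {u}) d a' := reach_mono Set.subset_union_left h1
      have h3 : Reach G (C₂ ∪ {u}) d u :=
        h2.tail ⟨hb'u ▸ hab', Or.inl ha'C, Or.inr rfl⟩
      exact reach_mono hsub h3
    exact huD ((hd : Reach G (H \ {u'}) w' d).trans hdu')
  -- D ⊊ C, contradiction with minimality
  have hu'D : u' ∉ D := fun h => (comp_subset hw'H h).2 rfl
  have hssub : D ⊂ C := ⟨hDsubC, fun h => hu'D (h hu'C)⟩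
  have hlt : D.ncard < C.ncard := Set.ncard_lt_ncard hssub (Set.toFinite C)
  have hDA : D.ncard ∈ A := ⟨u', hu'N, w', hw'H, rfl⟩
  exact hmin D.ncard hDA (hCn ▸ hlt)

/-- Growth lemma: connected sets of every size `k` with connected complement. -/
lemma grow (h2c : TwoConn G) :
    ∀ k, 1 ≤ k → k + 1 ≤ Fintype.card V →
    ∃ S : Set V, S.ncard = k ∧ (G.induce S).Connected ∧ (G.induce Sᶜ).Connected := by
  intro k
  induction k with
  | zero => omega
  | succ k ih =>
    intro _ hk1
    rcases Nat.eq_zero_or_pos k with hk0 | hkpos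
    · subst hk0
      have : Nonempty V := Fintype.card_pos_iff.mp (by omega)
      obtain ⟨v⟩ := this
      refine ⟨{v}, Set.ncard_singleton v, ?_, h2c.2.2 v⟩
      rw [induce_connected_iff]
      exact ⟨⟨v, rfl⟩, by rintro x rfl y rfl; exact Relation.ReflTransGen.refl⟩
    · obtain ⟨S, hScard, hSconn, hScconn⟩ := ih hkpos (by omega)
      have hsum := Set.ncard_add_ncard_compl S
      rw [Nat.card_eq_fintype_card] at hsum
      have hSc2 : 2 ≤ Sᶜ.ncard := by omega
      have hSne : S.Nonempty := by rw [← Set.ncard_pos]; omega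
      obtain ⟨u, huSc, ⟨t, htS, hut⟩, hconn⟩ := key h2c hSne hScconn hSc2
      refine ⟨insert u S, ?_, ?_, ?_⟩
      · rw [Set.ncard_insert_of_notMem huSc (Set.toFinite S), hScard]
      · rw [induce_connected_iff]
        obtain ⟨-, hSreach⟩ := induce_connected_iff.mp hSconn
        have hreach_t : ∀ x ∈ insert u S, Reach G (insert u S) x t := by
          rintro x (rfl | hxS)
          · exact Relation.ReflTransGen.single ⟨hut, Set.mem_insert _ _,
              Set.mem_insert_of_mem _ htS⟩
          · exact reach_mono (Set.subset_insert u S) (hSreach x hxS t htS)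
        refine ⟨⟨u, Set.mem_insert _ _⟩, fun x hx y hy => ?_⟩
        exact (hreach_t x hx).trans (reach_symm (hreach_t y hy))
      · have hcompl : (insert u S)ᶜ = Sᶜ \ {u} := by ext x; simp [and_comm]
        rw [hcompl]
        exact hconn

end Key

theorem stmt11 {V : Type*} [Fintype V] (G : SimpleGraph V)
    (h2c : TwoConn G) (n₁ n₂ : ℕ) (h₁ : 0 < n₁) (h₂ : 0 < n₂)
    (hsum : n₁ + n₂ = Fintype.card V) :
    ∃ V₁ V₂ : Set V, V₁ ∪ V₂ = Set.univ ∧ V₁ ∩ V₂ = ∅ ∧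
      V₁.ncard = n₁ ∧ V₂.ncard = n₂ ∧
      (G.induce V₁).Connected ∧ (G.induce V₂).Connected := by
  obtain ⟨S, hScard, hSconn, hScconn⟩ := grow h2c n₁ h₁ (by omega)
  have hsum' := Set.ncard_add_ncard_compl S
  rw [Nat.card_eq_fintype_card] at hsum'
  exact ⟨S, Sᶜ, Set.union_compl_self S, Set.inter_compl_self S, hScard, by omega,
    hSconn, hScconn⟩
end
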